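/- A point (λ1,λ2,λ3) in the GHZ-polytope (convex hull of (1/2,1/2,1/2), (1/2,1/2,1), (1/2,1,1/2), (1,1/2,1/2), (1,1,1)) lies in the W-polytope (convex hull of (1,1,1), (1/2,1/2,1), (1/2,1,1/2), (1,1/2,1/2)) if and only if λ1 + λ2 + λ3 ≥ 2. -/

import Mathlib

lemma halfspace_convex (a b c d : ℝ) :
    Convex ℝ {y : Fin 3 → ℝ | a * y 0 + b * y 1 + c * y 2 ≤ d} := by
  intro u hu v hv s t hs ht hst
  simp only [Set.mem_setOf_eq, Pi.add_apply, Pi.smul_apply, smul_eq_mul] at *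
  calc a * (s * u 0 + t * v 0) + b * (s * u 1 + t * v 1) + c * (s * u 2 + t * v 2)
      = s * (a * u 0 + b * u 1 + c * u 2) + t * (a * v 0 + b * v 1 + c * v 2) := by ring
    _ ≤ s * d + t * d :=
        add_le_add (mul_le_mul_of_nonneg_left hu hs) (mul_le_mul_of_nonneg_left hv ht)
    _ = d := by rw [← add_mul, hst, one_mul]

theorem mem_W_iff_sum_ge_two (x : Fin 3 → ℝ)
    (hx : x ∈ convexHull ℝ
      ({![(1:ℝ)/2,1/2,1/2], ![1/2,1/2,1], ![1/2,1,1/2], ![1,1/2,1/2], ![1,1,1]} :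
        Set (Fin 3 → ℝ))) :
    x ∈ convexHull ℝ
        ({![(1:ℝ),1,1], ![1/2,1/2,1], ![1/2,1,1/2], ![1,1/2,1/2]} : Set (Fin 3 → ℝ)) ↔
      2 ≤ x 0 + x 1 + x 2 := by
  have extract : ∀ a b c d : ℝ,
      (∀ y ∈ ({![(1:ℝ)/2,1/2,1/2], ![1/2,1/2,1], ![1/2,1,1/2], ![1,1/2,1/2], ![1,1,1]} :
        Set (Fin 3 → ℝ)), a * y 0 + b * y 1 + c * y 2 ≤ d) →
      a * x 0 + b * x 1 + c * x 2 ≤ d := by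
    intro a b c d hsub
    exact convexHull_min hsub (halfspace_convex a b c d) hx
  have h1 : x 0 + x 1 - x 2 ≤ 1 := by
    have := extract 1 1 (-1) 1 ?_
    · linarith
    · intro y hy
      simp only [Set.mem_insert_iff, Set.mem_singleton_iff] at hy
      rcases hy with rfl | rfl | rfl | rfl | rfl <;> norm_num [Matrix.cons_val_two, Matrix.vecHead, Matrix.vecTail]
  have h2 : x 0 - x 1 + x 2 ≤ 1 := by
    have := extract 1 (-1) 1 1 ?_
    · linarith
    · intro y hy
      simp only [Set.mem_insert_iff, Set.mem_singleton_iff] at hy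
      rcases hy with rfl | rfl | rfl | rfl | rfl <;> norm_num [Matrix.cons_val_two, Matrix.vecHead, Matrix.vecTail]
  have h3 : x 1 + x 2 - x 0 ≤ 1 := by
    have := extract (-1) 1 1 1 ?_
    · linarith
    · intro y hy
      simp only [Set.mem_insert_iff, Set.mem_singleton_iff] at hy
      rcases hy with rfl | rfl | rfl | rfl | rfl <;> norm_num [Matrix.cons_val_two, Matrix.vecHead, Matrix.vecTail]
  constructor
  · intro hW
    have : (-1 : ℝ) * x 0 + (-1) * x 1 + (-1) * x 2 ≤ -2 := by
      refine convexHull_min ?_ (halfspace_convex (-1) (-1) (-1) (-2)) hW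
      intro y hy
      simp only [Set.mem_insert_iff, Set.mem_singleton_iff] at hy
      rcases hy with rfl | rfl | rfl | rfl <;> norm_num [Matrix.cons_val_two, Matrix.vecHead, Matrix.vecTail]
    linarith
  · intro hsum
    set w : Fin 4 → ℝ := ![x 0 + x 1 + x 2 - 2, 1 - (x 0 + x 1 - x 2),
      1 - (x 0 - x 1 + x 2), 1 - (x 1 + x 2 - x 0)] with hw
    set z : Fin 4 → (Fin 3 → ℝ) := ![![1,1,1], ![1/2,1/2,1], ![1/2,1,1/2], ![1,1/2,1/2]]
      with hz
    have hmem : ∑ i : Fin 4, w i • z i ∈ convexHull ℝ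
        ({![(1:ℝ),1,1], ![1/2,1/2,1], ![1/2,1,1/2], ![1,1/2,1/2]} : Set (Fin 3 → ℝ)) := by
      apply (convex_convexHull ℝ _).sum_mem
      · intro i _
        fin_cases i <;> simp [hw] <;> linarith
      · simp [hw, Fin.sum_univ_four]; ring
      · intro i _
        apply subset_convexHull
        fin_cases i <;> simp [hz]
    have hx' : x = ∑ i : Fin 4, w i • z i := by
      have e0 : x 0 = (∑ i : Fin 4, w i • z i) 0 := by
        simp [Fin.sum_univ_four, hw, hz, Matrix.vecHead, Matrix.vecTail]; ring
      have e1 : x 1 = (∑ i : Fin 4, w i • z i) 1 := by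
        simp [Fin.sum_univ_four, hw, hz, Matrix.vecHead, Matrix.vecTail]; ring
      have e2 : x 2 = (∑ i : Fin 4, w i • z i) 2 := by
        simp [Fin.sum_univ_four, hw, hz, Matrix.vecHead, Matrix.vecTail]; ring
      funext j
      fin_cases j
      · exact e0
      · exact e1
      · exact e2
    rwa [hx']
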